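/- For integers a, b, i with a > 2b > 0, a + b = 2^i + 2^{i-1}, write a = 2^i + c and b = 2^{i-1} - c with 0 < c < 2^{i-1}. Then the binomial coefficient C(a-b, 2^i - b) = C(2^{i-1} + 2c, c) is even. -/

import Mathlib

/-- For integers `a, b, i` with `a > 2b > 0` and `a + b = 2^i + 2^(i-1)`,
the binomial coefficient `C(a - b, 2^i - b)` is even. -/
theorem stmt0 (a b i : ℕ) (hb : 0 < b) (hab : 2 * b < a) (hi : 1 ≤ i)
    (hsum : a + b = 2 ^ i + 2 ^ (i - 1)) :
    2 ∣ Nat.choose (a - b) (2 ^ i - b) := by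
  haveI : Fact (Nat.Prime 2) := ⟨Nat.prime_two⟩
  have hP : 2 ^ i = 2 * 2 ^ (i - 1) := by
    conv_lhs => rw [← Nat.sub_add_cancel hi, pow_succ, mul_comm]
  set P := 2 ^ (i - 1) with hPdef
  have hPpos : 0 < P := Nat.pow_pos (by norm_num)
  have hbP : b < P := by omega
  set c := a - 2 * P with hcdef
  have hc0 : 0 < c := by omega
  have hcP : c < P := by omega
  have hn : a - b = P + 2 * c := by omega
  have hk : 2 ^ i - b = P + c := by omega
  rw [hn, hk]
  -- write c = 2^t * c' with c' odd
  obtain ⟨t, c', hc', hceq⟩ := Nat.exists_eq_pow_mul_and_not_dvd (by omega : c ≠ 0) 2 (by norm_num)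
  have hc'1 : c' % 2 = 1 := by
    rcases Nat.mod_two_eq_zero_or_one c' with h | h
    · exact absurd (Nat.dvd_iff_mod_eq_zero.mpr h) hc'
    · exact h
  have hc'pos : 0 < c' := by omega
  have htlt : t + 1 ≤ i - 1 := by
    have h1 : 2 ^ t ≤ c := by
      rw [hceq]; exact Nat.le_mul_of_pos_right _ hc'pos
    have h2 : (2:ℕ) ^ t < 2 ^ (i - 1) := lt_of_le_of_lt h1 hcP
    have := (Nat.pow_lt_pow_iff_right (by norm_num : (1:ℕ) < 2)).mp h2
    omega
  -- the carry at position t+1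
  have hcmod : c % 2 ^ (t + 1) = 2 ^ t := by
    rw [hceq, pow_succ, Nat.mul_mod_mul_left, hc'1, mul_one]
  have hdvdP : 2 ^ (t + 1) ∣ P := pow_dvd_pow 2 htlt
  obtain ⟨d, hd⟩ := hdvdP
  have hkmod : (P + c) % 2 ^ (t + 1) = 2 ^ t := by
    rw [hd, Nat.mul_add_mod, hcmod]
  set n := P + 2 * c with hndef
  set k := P + c with hkdef
  have hkn : k ≤ n := by omega
  have hnk : n - k = c := by omega
  have hlog : t + 1 ≤ Nat.log 2 n := by
    apply Nat.le_log_of_pow_le (by norm_num)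
    calc 2 ^ (t + 1) ≤ P := Nat.pow_le_pow_right (by norm_num) htlt
      _ ≤ n := by omega
  have hmem : t + 1 ∈ (Finset.Ico 1 (Nat.log 2 n + 1)).filter
      (fun j => 2 ^ j ≤ k % 2 ^ j + (n - k) % 2 ^ j) := by
    simp only [Finset.mem_filter, Finset.mem_Ico]
    refine ⟨⟨by omega, by omega⟩, ?_⟩
    rw [hnk, hcmod, hkmod, pow_succ]
    omega
  have hval : 1 ≤ padicValNat 2 (Nat.choose n k) := by
    rw [padicValNat_choose hkn (Nat.lt_succ_self _)]
    exact Finset.card_pos.mpr ⟨t + 1, hmem⟩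
  calc (2:ℕ) = 2 ^ 1 := (pow_one 2).symm
    _ ∣ 2 ^ padicValNat 2 (Nat.choose n k) := pow_dvd_pow 2 hval
    _ ∣ Nat.choose n k := pow_padicValNat_dvd
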